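/- Let n ≥ 1, let q₁, …, q_m ∈ ℂ[x₁,…,xₙ] be nonconstant irreducible polynomials, and let p ∈ ℂ[x₁,…,xₙ] be a nonconstant polynomial whose zero set V(p) is a finite union of finite intersections of sets each of which is an allowable hyperplane Z_i, S_{ij}, D_{ij} or one of the hypersurfaces V(q_l). Then p = c · ∏_j p_j, where c is a nonzero complex constant and each p_j is a power of one of x_i, x_i − x_j, x_i + x_j, or one of the polynomials q_l. -/

import Mathlib

open MvPolynomial

noncomputable section

private lemma aux_isUnit_eq_C : ∀ {n : ℕ} (u : MvPolynomial (Fin n) ℂ), IsUnit u →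
    ∃ c : ℂ, c ≠ 0 ∧ u = MvPolynomial.C c := by
  intro n
  induction n with
  | zero =>
    intro u hu
    obtain ⟨c, rfl⟩ := MvPolynomial.C_surjective (Fin 0) u
    refine ⟨c, ?_, rfl⟩
    rintro rfl
    simp at hu
  | succ n ih =>
    intro u hu
    have h2 : IsUnit (MvPolynomial.finSuccEquiv ℂ n u) := hu.map _
    obtain ⟨r, hr, hru⟩ := Polynomial.isUnit_iff.mp h2
    obtain ⟨c, hc0, rfl⟩ := ih r hr
    refine ⟨c, hc0, ?_⟩
    apply (MvPolynomial.finSuccEquiv ℂ n).injective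
    rw [← hru]
    simp [MvPolynomial.finSuccEquiv_apply]

private lemma aux_prime_X {n : ℕ} (i : Fin (n + 1)) :
    Prime (MvPolynomial.X i : MvPolynomial (Fin (n + 1)) ℂ) := by
  have h0 : Prime (MvPolynomial.X 0 : MvPolynomial (Fin (n + 1)) ℂ) := by
    rw [← MulEquiv.prime_iff (MvPolynomial.finSuccEquiv ℂ n).toRingEquiv.toMulEquiv]
    have : ((MvPolynomial.finSuccEquiv ℂ n).toRingEquiv.toMulEquiv)
        (MvPolynomial.X 0 : MvPolynomial (Fin (n + 1)) ℂ) = Polynomial.X := by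
      simpa using MvPolynomial.finSuccEquiv_X_zero (R := ℂ) (n := n)
    rw [this]
    exact Polynomial.prime_X
  have := (MulEquiv.prime_iff
    (MvPolynomial.renameEquiv ℂ (Equiv.swap (0 : Fin (n+1)) i)).toRingEquiv.toMulEquiv).mpr h0
  simpa using this

private lemma aux_prime_shift {n : ℕ} {i j : Fin n} (hij : j ≠ i) (a : ℂ)
    (hXi : Prime (MvPolynomial.X i : MvPolynomial (Fin n) ℂ)) :
    Prime (MvPolynomial.X i + MvPolynomial.C a * MvPolynomial.X j : MvPolynomial (Fin n) ℂ) := by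
  classical
  let φ : ℂ → MvPolynomial (Fin n) ℂ →ₐ[ℂ] MvPolynomial (Fin n) ℂ := fun a =>
    MvPolynomial.aeval (fun k => if k = i then
      MvPolynomial.X i + MvPolynomial.C a * MvPolynomial.X j else MvPolynomial.X k)
  have hcomp : ∀ a : ℂ, (φ a).comp (φ (-a)) = AlgHom.id ℂ _ := by
    intro a
    apply MvPolynomial.algHom_ext
    intro k
    by_cases hk : k = i
    · subst hk
      simp [φ, hij]
    · simp [φ, hk]
  let e : MvPolynomial (Fin n) ℂ ≃ₐ[ℂ] MvPolynomial (Fin n) ℂ :=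
    AlgEquiv.ofAlgHom (φ a) (φ (-a)) (hcomp a) (by have := hcomp (-a); rwa [neg_neg] at this)
  have := (MulEquiv.prime_iff e.toRingEquiv.toMulEquiv).mpr hXi
  simpa [e, φ] using this

private lemma aux_prime_add {n : ℕ} (i j : Fin (n + 1)) (hij : i ≠ j) :
    Prime (MvPolynomial.X i + MvPolynomial.X j : MvPolynomial (Fin (n + 1)) ℂ) := by
  have := aux_prime_shift (Ne.symm hij) 1 (aux_prime_X i)
  simpa using this

private lemma aux_prime_sub {n : ℕ} (i j : Fin (n + 1)) (hij : i ≠ j) :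
    Prime (MvPolynomial.X i - MvPolynomial.X j : MvPolynomial (Fin (n + 1)) ℂ) := by
  have := aux_prime_shift (Ne.symm hij) (-1) (aux_prime_X i)
  have he : MvPolynomial.X i + MvPolynomial.C (-1 : ℂ) * MvPolynomial.X j
      = (MvPolynomial.X i - MvPolynomial.X j : MvPolynomial (Fin (n + 1)) ℂ) := by
    simp; ring
  rwa [he] at this

end

/-- A basic set for black-box arithmetic: an allowable hyperplane `{x_i = 0}`,
`{x_i + x_j = 0}`, `{x_i - x_j = 0}`, or the zero set of one of the black-box
polynomials `q l`. -/
def IsBasicQSet (n m : ℕ) (q : Fin m → MvPolynomial (Fin n) ℂ)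
    (W : Set (Fin n → ℂ)) : Prop :=
  (∃ i : Fin n, W = {x | x i = 0}) ∨
  (∃ i j : Fin n, i ≠ j ∧ W = {x | x i + x j = 0}) ∨
  (∃ i j : Fin n, i ≠ j ∧ W = {x | x i - x j = 0}) ∨
  (∃ l : Fin m, W = {x | MvPolynomial.eval x (q l) = 0})

/-- If the variety of a nonconstant complex polynomial `p` is a finite union of
finite intersections of allowable hyperplanes and hypersurfaces `V(q_l)` (the `q_l` being
nonconstant irreducible), then `p` is a nonzero constant times a product of powers of
`x_i`, `x_i - x_j`, `x_i + x_j`, and the `q_l`. -/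
theorem stmt_19 (n m : ℕ) (hn : 1 ≤ n)
    (q : Fin m → MvPolynomial (Fin n) ℂ)
    (hq : ∀ l, 0 < (q l).totalDegree ∧ Irreducible (q l))
    (p : MvPolynomial (Fin n) ℂ) (hp : 0 < p.totalDegree)
    (K : ℕ) (r : Fin K → ℕ) (H : (i : Fin K) → Fin (r i) → Set (Fin n → ℂ))
    (hH : ∀ i j, IsBasicQSet n m q (H i j))
    (hV : {x | MvPolynomial.eval x p = 0} = ⋃ i, ⋂ j, H i j) :
    ∃ c : ℂ, c ≠ 0 ∧ ∃ (s : ℕ) (f : Fin s → MvPolynomial (Fin n) ℂ),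
      (∀ t, ∃ k : ℕ,
        (∃ i, f t = MvPolynomial.X i ^ k) ∨
        (∃ i j, i ≠ j ∧ f t = (MvPolynomial.X i - MvPolynomial.X j) ^ k) ∨
        (∃ i j, i ≠ j ∧ f t = (MvPolynomial.X i + MvPolynomial.X j) ^ k) ∨
        (∃ l, f t = q l ^ k)) ∧
      p = MvPolynomial.C c * ∏ t, f t := by
  classical
  have hp0 : p ≠ 0 := by rintro rfl; simp at hp
  have hr : ∀ i, 0 < r i := by
    by_contra hcon
    push_neg at hcon
    obtain ⟨i0, hi0⟩ := hcon
    have hempty : IsEmpty (Fin (r i0)) := by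
      rw [Nat.le_zero] at hi0; rw [hi0]; infer_instance
    have hall : ∀ x : Fin n → ℂ, MvPolynomial.eval x p = 0 := by
      intro x
      have hx : x ∈ ⋃ i, ⋂ j, H i j :=
        Set.mem_iUnion.2 ⟨i0, Set.mem_iInter.2 fun j => hempty.elim j⟩
      rw [← hV] at hx
      exact hx
    exact hp0 (MvPolynomial.funext (by simpa using hall))
  obtain ⟨n', rfl⟩ : ∃ n', n = n' + 1 := ⟨n - 1, by omega⟩
  have hbasic : ∀ i j, ∃ b : MvPolynomial (Fin (n' + 1)) ℂ,
      Irreducible b ∧ (H i j = {x | MvPolynomial.eval x b = 0}) ∧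
      ((∃ i1, b = MvPolynomial.X i1) ∨
       (∃ i1 j1, i1 ≠ j1 ∧ b = MvPolynomial.X i1 - MvPolynomial.X j1) ∨
       (∃ i1 j1, i1 ≠ j1 ∧ b = MvPolynomial.X i1 + MvPolynomial.X j1) ∨
       (∃ l, b = q l)) := by
    intro i j
    rcases hH i j with ⟨i1, hW⟩ | ⟨i1, j1, hne, hW⟩ | ⟨i1, j1, hne, hW⟩ | ⟨l, hW⟩
    · exact ⟨MvPolynomial.X i1, (aux_prime_X i1).irreducible,
        by rw [hW]; ext x; simp, Or.inl ⟨i1, rfl⟩⟩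
    · exact ⟨MvPolynomial.X i1 + MvPolynomial.X j1, (aux_prime_add i1 j1 hne).irreducible,
        by rw [hW]; ext x; simp, Or.inr (Or.inr (Or.inl ⟨i1, j1, hne, rfl⟩))⟩
    · exact ⟨MvPolynomial.X i1 - MvPolynomial.X j1, (aux_prime_sub i1 j1 hne).irreducible,
        by rw [hW]; ext x; simp, Or.inr (Or.inl ⟨i1, j1, hne, rfl⟩)⟩
    · exact ⟨q l, (hq l).2, hW, Or.inr (Or.inr (Or.inr ⟨l, rfl⟩))⟩
  choose b hirr hset hshape using hbasic
  set F : MvPolynomial (Fin (n' + 1)) ℂ := ∏ i, ∏ j, b i j with hF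
  have hFkey : ∀ x, MvPolynomial.eval x p = 0 → MvPolynomial.eval x F = 0 := by
    intro x hx
    have hx2 : x ∈ ⋃ i, ⋂ j, H i j := by rw [← hV]; exact hx
    obtain ⟨i, hi⟩ := Set.mem_iUnion.1 hx2
    have hij : ∀ j, MvPolynomial.eval x (b i j) = 0 := by
      intro j
      have h3 := Set.mem_iInter.1 hi j
      rw [hset i j] at h3; exact h3
    rw [hF, map_prod]
    refine Finset.prod_eq_zero (Finset.mem_univ i) ?_
    rw [map_prod]
    exact Finset.prod_eq_zero (Finset.mem_univ (⟨0, hr i⟩ : Fin (r i))) (hij _)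
  have hfac : ∀ g : MvPolynomial (Fin (n' + 1)) ℂ, Prime g → g ∣ p →
      ∃ bb, Associated g bb ∧
      ((∃ i1, bb = MvPolynomial.X i1) ∨
       (∃ i1 j1, i1 ≠ j1 ∧ bb = MvPolynomial.X i1 - MvPolynomial.X j1) ∨
       (∃ i1 j1, i1 ≠ j1 ∧ bb = MvPolynomial.X i1 + MvPolynomial.X j1) ∨
       (∃ l, bb = q l)) := by
    intro g hg hgp
    have hFg : g ∣ F := by
      have hsp : (Ideal.span {g}).IsPrime := (Ideal.span_singleton_prime hg.ne_zero).mpr hg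
      have hmem : F ∈ MvPolynomial.vanishingIdeal ℂ (MvPolynomial.zeroLocus ℂ (Ideal.span {g})) := by
        intro x hx
        have hgx : MvPolynomial.eval x g = 0 := hx g (Ideal.mem_span_singleton_self g)
        have hpx : MvPolynomial.eval x p = 0 := by
          obtain ⟨t, rfl⟩ := hgp
          simp [hgx]
        exact hFkey x hpx
      rwa [MvPolynomial.vanishingIdeal_zeroLocus_eq_radical, hsp.radical,
        Ideal.mem_span_singleton] at hmem
    obtain ⟨i, -, hi⟩ := hg.exists_mem_finset_dvd hFg
    obtain ⟨j, -, hj⟩ := hg.exists_mem_finset_dvd hi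
    exact ⟨b i j, hg.irreducible.associated_of_dvd (hirr i j) hj, hshape i j⟩
  set M := UniqueFactorizationMonoid.factors p with hM
  have hMp : Associated M.prod p := UniqueFactorizationMonoid.factors_prod hp0
  set L := M.toList with hL
  have hLmem : ∀ t : Fin L.length, L.get t ∈ M := fun t =>
    Multiset.mem_toList.mp (L.get_mem t)
  have hch : ∀ t : Fin L.length, ∃ bb, Associated (L.get t) bb ∧
      ((∃ i1, bb = MvPolynomial.X i1) ∨
       (∃ i1 j1, i1 ≠ j1 ∧ bb = MvPolynomial.X i1 - MvPolynomial.X j1) ∨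
       (∃ i1 j1, i1 ≠ j1 ∧ bb = MvPolynomial.X i1 + MvPolynomial.X j1) ∨
       (∃ l, bb = q l)) :=
    fun t => hfac _ (UniqueFactorizationMonoid.prime_of_factor _ (hLmem t))
      ((Multiset.dvd_prod (hLmem t)).trans hMp.dvd)
  choose f hf1 hf2 using hch
  have hprod1 : Associated (∏ t, L.get t) (∏ t, f t) :=
    Associated.prod _ _ _ (fun t _ => hf1 t)
  have hprod2 : (∏ t : Fin L.length, L.get t) = M.prod := by
    rw [← Multiset.prod_toList]
    simp only [List.get_eq_getElem]
    exact Fin.prod_univ_getElem L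
  have hassoc : Associated (∏ t, f t) p := hprod1.symm.trans (hprod2 ▸ hMp)
  obtain ⟨u, hu⟩ := hassoc
  obtain ⟨c, hc0, hcu⟩ := aux_isUnit_eq_C (u : MvPolynomial (Fin (n' + 1)) ℂ) u.isUnit
  refine ⟨c, hc0, L.length, f, ?_, ?_⟩
  · intro t
    rcases hf2 t with ⟨i, h⟩ | ⟨i, j, hne, h⟩ | ⟨i, j, hne, h⟩ | ⟨l, h⟩
    · exact ⟨1, Or.inl ⟨i, by simpa using h⟩⟩
    · exact ⟨1, Or.inr (Or.inl ⟨i, j, hne, by simpa using h⟩)⟩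
    · exact ⟨1, Or.inr (Or.inr (Or.inl ⟨i, j, hne, by simpa using h⟩))⟩
    · exact ⟨1, Or.inr (Or.inr (Or.inr ⟨l, by simpa using h⟩))⟩
  · rw [← hu, hcu]
    ring
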